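/- Let v : [0,1] → ℝ be continuous on [0,1], continuously differentiable with v'(0) = 0, and satisfy (τ v'(τ))' = -Ha²·τ·(1 - v(τ)/(1 - α v(τ))) on (0,1). Assume α > 0, Ha² > 0, and 0 ≤ v(τ) < 1/(1 + α) for all τ ∈ (0,1). Then v'(τ) < 0 for all τ ∈ (0,1); i.e., v is strictly decreasing on (0,1). -/
import Mathlib


theorem stmt_6 (α Ha : ℝ) (v v' : ℝ → ℝ)
    (hα : 0 < α) (hHa : 0 < Ha ^ 2)
    (hc : ContinuousOn v (Set.Icc 0 1))
    (hd : ∀ τ ∈ Set.Icc (0 : ℝ) 1, HasDerivAt v (v' τ) τ)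
    (hv'c : ContinuousOn v' (Set.Icc 0 1))
    (hbc0 : v' 0 = 0)
    (heq : ∀ τ ∈ Set.Ioo (0 : ℝ) 1,
      HasDerivAt (fun s => s * v' s) (-Ha ^ 2 * τ * (1 - v τ / (1 - α * v τ))) τ)
    (hbnd : ∀ τ ∈ Set.Ioo (0 : ℝ) 1, 0 ≤ v τ ∧ v τ < 1 / (1 + α)) :
    ∀ τ ∈ Set.Ioo (0 : ℝ) 1, v' τ < 0 := by
  intro τ hτ
  obtain ⟨hτ0, hτ1⟩ := hτ
  -- g = fun s => s * v' s is strictly decreasing on [0, τ]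
  have hsub : Set.Icc (0:ℝ) τ ⊆ Set.Icc 0 1 := Set.Icc_subset_Icc le_rfl hτ1.le
  have hgc : ContinuousOn (fun s => s * v' s) (Set.Icc 0 τ) :=
    (continuousOn_id.mul (hv'c.mono hsub))
  have hanti : StrictAntiOn (fun s => s * v' s) (Set.Icc 0 τ) := by
    apply strictAntiOn_of_deriv_neg (convex_Icc 0 τ) hgc
    intro x hx
    rw [interior_Icc] at hx
    have hx' : x ∈ Set.Ioo (0:ℝ) 1 := ⟨hx.1, lt_of_lt_of_le hx.2 hτ1.le⟩
    rw [(heq x hx').deriv]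
    obtain ⟨hv0, hv1⟩ := hbnd x hx'
    have h1α : (0:ℝ) < 1 + α := by linarith
    have hvlt : v x * (1 + α) < 1 := (lt_div_iff₀ h1α).mp hv1
    have hden : 0 < 1 - α * v x := by nlinarith
    have : v x / (1 - α * v x) < 1 := by
      rw [div_lt_one hden]; nlinarith
    have : 0 < 1 - v x / (1 - α * v x) := by linarith
    have := mul_pos (mul_pos hHa hx.1) this
    nlinarith
  have h0 : (0:ℝ) ∈ Set.Icc (0:ℝ) τ := ⟨le_rfl, hτ0.le⟩
  have hτm : τ ∈ Set.Icc (0:ℝ) τ := ⟨hτ0.le, le_rfl⟩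
  have := hanti h0 hτm hτ0
  simp only [hbc0, zero_mul] at this
  nlinarith
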